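/- In the twisted group algebra A(S_n), for 1 ≤ k ≤ m < p ≤ n the commutation rule t_{m,k}* · t_{p,k}* = (t_k*)² · t_{p,k+1}* · t_{m-1,k}* holds, where (t_k*)² = X_{k,k+1}·X_{k+1,k}·id. -/

import Mathlib

open MvPolynomial

/-- The polynomial ring `R_n = ℂ[X_{ab} : 1 ≤ a,b ≤ n]` in `n²` commuting variables. -/
abbrev R (n : ℕ) : Type := MvPolynomial (Fin n × Fin n) ℂ

/-- The action of `S_n` on `R_n`: `g.X_{ab} = X_{g(a) g(b)}`. -/
noncomputable def permAct {n : ℕ} (g : Equiv.Perm (Fin n)) (p : R n) : R n :=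
  MvPolynomial.rename (fun ab => (g ab.1, g ab.2)) p

/-- The twisted group algebra `A(S_n) = R_n ⋊ ℂ[S_n]`, as formal `R_n`-linear
combinations of permutations. -/
abbrev A (n : ℕ) : Type := Equiv.Perm (Fin n) →₀ R n

/-- The identity element `id = 1·id` of `A(S_n)`. -/
noncomputable instance {n : ℕ} : One (A n) := ⟨Finsupp.single 1 1⟩

/-- The twisted multiplication `(p₁ g₁)·(p₂ g₂) = (p₁ · (g₁.p₂)) g₁g₂` on `A(S_n)`. -/
noncomputable instance {n : ℕ} : Mul (A n) :=
  ⟨fun x y => x.sum fun g₁ p₁ => y.sum fun g₂ p₂ =>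
    Finsupp.single (g₁ * g₂) (p₁ * permAct g₁ p₂)⟩

/-- The set of inversions `I(g) = {(a,b) : a < b, g(a) > g(b)}`. -/
def inversions {n : ℕ} (g : Equiv.Perm (Fin n)) : Finset (Fin n × Fin n) :=
  Finset.univ.filter fun ab => ab.1 < ab.2 ∧ g ab.2 < g ab.1

/-- The monomial `X_g = ∏_{(a,b) ∈ I(g⁻¹)} X_{ab}`. -/
noncomputable def Xg {n : ℕ} (g : Equiv.Perm (Fin n)) : R n :=
  ∏ ab ∈ inversions g⁻¹, MvPolynomial.X ab

/-- The element `g* = X_g · g ∈ A(S_n)`. -/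
noncomputable def gstar {n : ℕ} (g : Equiv.Perm (Fin n)) : A n :=
  Finsupp.single g (Xg g)

/-- The cycle `t_{k,j}` sending `m ↦ m+1` for `j ≤ m ≤ k-1` and `k ↦ j`,
fixing all points outside `[j,k]` (meaningful for `j ≤ k`). -/
def cyc {n : ℕ} [NeZero n] (k j : Fin n) : Equiv.Perm (Fin n) :=
  Equiv.permCongr (Equiv.addLeft j) (Fin.cycleRange (k - j))

/-! ### Auxiliary lemmas -/

lemma cyc_val {N : ℕ} (q j x : Fin (N+1)) (hjq : (j:ℕ) ≤ q) :
    ((cyc q j x : Fin (N+1)) : ℕ) =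
      if (x:ℕ) < j then (x:ℕ) else if (x:ℕ) < q then (x:ℕ)+1
      else if (x:ℕ) = q then (j:ℕ) else (x:ℕ) := by
  have hq : (q:ℕ) ≤ N := Nat.lt_succ_iff.mp q.isLt
  have hx : (x:ℕ) ≤ N := Nat.lt_succ_iff.mp x.isLt
  have hj : (j:ℕ) ≤ N := Nat.lt_succ_iff.mp j.isLt
  have hcyc : cyc q j x = j + Fin.cycleRange (q - j) (-j + x) := rfl
  have hd : ((q - j : Fin (N+1)) : ℕ) = (q:ℕ) - j := by
    rw [Fin.sub_def]
    have h1 : N + 1 - (j:ℕ) + q = ((q:ℕ) - j) + (N+1) := by omega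
    simp only [h1, Nat.add_mod_right, Fin.val_mk]
    exact Nat.mod_eq_of_lt (by omega)
  have hy : ((-j + x : Fin (N+1)) : ℕ)
      = if (x:ℕ) < j then (x:ℕ) + (N+1) - j else (x:ℕ) - j := by
    rw [neg_add_eq_sub, Fin.sub_def]
    split_ifs with h
    · have h1 : N + 1 - (j:ℕ) + x = (x:ℕ) + (N+1) - j := by omega
      simp only [h1, Fin.val_mk]
      exact Nat.mod_eq_of_lt (by omega)
    · have h1 : N + 1 - (j:ℕ) + x = ((x:ℕ) - j) + (N+1) := by omega
      simp only [h1, Nat.add_mod_right, Fin.val_mk]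
      exact Nat.mod_eq_of_lt (by omega)
  set y : Fin (N+1) := -j + x with hyd
  rw [hcyc]
  rcases lt_or_ge (x:ℕ) (j:ℕ) with h1 | h1
  · have hgt : (q - j : Fin (N+1)) < y := by
      rw [Fin.lt_def, hd, hy, if_pos h1]; omega
    rw [Fin.cycleRange_of_gt hgt, Fin.val_add, hy, if_pos h1]
    have h2 : (j:ℕ) + ((x:ℕ) + (N+1) - j) = (x:ℕ) + (N+1) := by omega
    rw [h2, Nat.add_mod_right, Nat.mod_eq_of_lt (by omega), if_pos h1]
  · rcases lt_or_ge (x:ℕ) (q:ℕ) with h2 | h2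
    · have hlt : y < (q - j : Fin (N+1)) := by
        rw [Fin.lt_def, hd, hy, if_neg (by omega)]; omega
      rw [Fin.cycleRange_of_lt hlt, Fin.val_add, Fin.val_add_one_of_lt, hy,
        if_neg (by omega)]
      · have h3 : (j:ℕ) + (((x:ℕ) - j) + 1) = (x:ℕ) + 1 := by omega
        rw [h3, Nat.mod_eq_of_lt (by omega), if_neg (by omega), if_pos h2]
      · rw [Fin.lt_def, hy, if_neg (by omega)]
        simp only [Fin.val_last]
        omega
    · rcases eq_or_lt_of_le h2 with h3 | h3
      · have heq : y = q - j := by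
          apply Fin.ext; rw [hd, hy, if_neg (by omega)]; omega
        rw [Fin.cycleRange_of_eq heq, Fin.val_add, Fin.val_zero, Nat.add_zero,
          Nat.mod_eq_of_lt j.isLt, if_neg (by omega), if_neg (by omega), if_pos h3.symm]
      · have hgt : (q - j : Fin (N+1)) < y := by
          rw [Fin.lt_def, hd, hy, if_neg (by omega)]; omega
        rw [Fin.cycleRange_of_gt hgt, Fin.val_add, hy, if_neg (by omega)]
        have h4 : (j:ℕ) + ((x:ℕ) - j) = (x:ℕ) := by omega
        rw [h4, Nat.mod_eq_of_lt (by omega), if_neg (by omega), if_neg (by omega),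
          if_neg (by omega)]

lemma cyc_inv_val {N : ℕ} (q j x : Fin (N+1)) (hjq : (j:ℕ) ≤ q) :
    (((cyc q j)⁻¹ x : Fin (N+1)) : ℕ) =
      if (x:ℕ) < j then (x:ℕ) else if (x:ℕ) = j then (q:ℕ)
      else if (x:ℕ) ≤ q then (x:ℕ) - 1 else (x:ℕ) := by
  have hq : (q:ℕ) ≤ N := Nat.lt_succ_iff.mp q.isLt
  have hx : (x:ℕ) ≤ N := Nat.lt_succ_iff.mp x.isLt
  rcases lt_or_ge (x:ℕ) (j:ℕ) with h1 | h1
  · suffices h : (cyc q j)⁻¹ x = x by rw [h, if_pos h1]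
    rw [Equiv.Perm.inv_eq_iff_eq]
    exact (Fin.ext (by rw [cyc_val _ _ _ hjq, if_pos h1])).symm
  · rcases eq_or_lt_of_le h1 with h2 | h2
    · suffices h : (cyc q j)⁻¹ x = q by rw [h, if_neg (by omega), if_pos h2.symm]
      rw [Equiv.Perm.inv_eq_iff_eq]
      refine (Fin.ext ?_).symm
      rw [cyc_val _ _ _ hjq, if_neg (by omega), if_neg (by omega), if_pos rfl]
      omega
    · rcases le_or_gt (x:ℕ) (q:ℕ) with h3 | h3
      · suffices h : (cyc q j)⁻¹ x = ⟨(x:ℕ)-1, by omega⟩ by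
          rw [h, if_neg (by omega), if_neg (by omega), if_pos h3]
        rw [Equiv.Perm.inv_eq_iff_eq]
        refine (Fin.ext ?_).symm
        rw [cyc_val _ _ _ hjq]
        simp only [Fin.val_mk] at *
        rw [if_neg (by omega), if_pos (by omega)]
        omega
      · suffices h : (cyc q j)⁻¹ x = x by
          rw [h, if_neg (by omega), if_neg (by omega), if_neg (by omega)]
        rw [Equiv.Perm.inv_eq_iff_eq]
        refine (Fin.ext ?_).symm
        rw [cyc_val _ _ _ hjq, if_neg (by omega), if_neg (by omega), if_neg (by omega)]

lemma inversions_cyc_inv {N : ℕ} (q j : Fin (N+1)) (hjq : (j:ℕ) ≤ q) :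
    inversions ((cyc q j)⁻¹) = (Finset.Ioc j q).image (fun b => (j, b)) := by
  ext ⟨a, b⟩
  simp only [inversions, Finset.mem_filter, Finset.mem_univ, true_and, Finset.mem_image,
    Finset.mem_Ioc, Prod.mk.injEq]
  constructor
  · rintro ⟨hab, hinv⟩
    rw [Fin.lt_def, cyc_inv_val _ _ _ hjq, cyc_inv_val _ _ _ hjq] at hinv
    rw [Fin.lt_def] at hab
    refine ⟨b, ⟨?_, ?_⟩, ?_, rfl⟩
    · rw [Fin.lt_def]; split_ifs at hinv <;> omega
    · rw [Fin.le_def]; split_ifs at hinv <;> omega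
    · refine Fin.ext ?_; split_ifs at hinv <;> omega
  · rintro ⟨c, ⟨h1, h2⟩, rfl, rfl⟩
    rw [Fin.lt_def] at h1
    rw [Fin.le_def] at h2
    constructor
    · rw [Fin.lt_def]; omega
    · rw [Fin.lt_def, cyc_inv_val _ _ _ hjq, cyc_inv_val _ _ _ hjq]
      split_ifs <;> omega

lemma Xg_cyc {N : ℕ} (q j : Fin (N+1)) (hjq : (j:ℕ) ≤ q) :
    Xg (cyc q j) = ∏ b ∈ Finset.Ioc j q, (X (j, b) : R (N+1)) := by
  rw [Xg, inversions_cyc_inv _ _ hjq, Finset.prod_image]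
  intro a _ b _ h
  exact (Prod.mk.injEq _ _ _ _ ▸ h).2

lemma permAct_one {n : ℕ} (q : R n) : permAct 1 q = q := by
  have h : (fun ab : Fin n × Fin n => ((1 : Equiv.Perm (Fin n)) ab.1,
      (1 : Equiv.Perm (Fin n)) ab.2)) = id := by
    funext ab; simp
  rw [permAct, h, rename_id, AlgHom.id_apply]

lemma permAct_zero {n : ℕ} (g : Equiv.Perm (Fin n)) : permAct g (0 : R n) = 0 := by
  simp [permAct]

lemma single_mul_single {n : ℕ} (g h : Equiv.Perm (Fin n)) (p q : R n) :
    (Finsupp.single g p * Finsupp.single h q : A n)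
      = Finsupp.single (g * h) (p * permAct g q) := by
  show (Finsupp.single g p).sum (fun g₁ p₁ => (Finsupp.single h q).sum fun g₂ p₂ =>
      Finsupp.single (g₁ * g₂) (p₁ * permAct g₁ p₂)) = _
  rw [Finsupp.sum_single_index, Finsupp.sum_single_index]
  · simp [permAct_zero]
  · simp

lemma smul_one_eq {n : ℕ} (r : R n) : (r • (1 : A n)) = Finsupp.single 1 r := by
  show r • Finsupp.single (1 : Equiv.Perm (Fin n)) (1 : R n) = _
  rw [Finsupp.smul_single, smul_eq_mul, mul_one]

lemma permAct_prod {n : ℕ} (g : Equiv.Perm (Fin n)) (s : Finset (Fin n)) (c : Fin n) :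
    permAct g (∏ b ∈ s, (X (c, b) : R n)) = ∏ b ∈ s, (X (g c, g b) : R n) := by
  rw [permAct, map_prod]
  simp [rename_X]

lemma prod_perm {α : Type*} [DecidableEq α] {M : Type*} [CommMonoid M] (g : Equiv.Perm α)
    {s t : Finset α} (h : ∀ b ∈ s, g b ∈ t) (h' : ∀ y ∈ t, g⁻¹ y ∈ s) (f : α → M) :
    ∏ b ∈ s, f (g b) = ∏ y ∈ t, f y := by
  have himg : s.image g = t := by
    ext y
    simp only [Finset.mem_image]
    constructor
    · rintro ⟨b, hb, rfl⟩; exact h b hb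
    · intro hy; exact ⟨g⁻¹ y, h' y hy, g.apply_symm_apply y⟩
  rw [← himg, Finset.prod_image (fun a _ b _ hab => g.injective hab)]

set_option maxHeartbeats 2000000 in
/-- The permutation identity `t_{m,k} t_{p,k} = t_{p,k+1} t_{m-1,k}`. -/
lemma cyc_mul_cyc {N : ℕ} (k k1 m m1 p : Fin (N+1))
    (hk1 : (k1 : ℕ) = (k : ℕ) + 1) (hm1 : (m1 : ℕ) + 1 = (m : ℕ))
    (hkm : (k:ℕ) < m) (hmp : (m:ℕ) < p) :
    cyc m k * cyc p k = cyc p k1 * cyc m1 k := by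
  have hp : (p:ℕ) ≤ N := Nat.lt_succ_iff.mp p.isLt
  apply Equiv.ext
  intro x
  have hx : (x:ℕ) ≤ N := Nat.lt_succ_iff.mp x.isLt
  apply Fin.ext
  simp only [Equiv.Perm.mul_apply]
  rw [cyc_val m k _ (by omega), cyc_val p k1 _ (by omega),
    cyc_val p k _ (by omega), cyc_val m1 k _ (by omega)]
  split_ifs <;> omega

/-- the commutation rule
`t_{m,k}*·t_{p,k}* = (t_k*)²·t_{p,k+1}*·t_{m-1,k}*` for `k+1 ≤ m < p ≤ n`,
where `(t_k*)² = X_{k,k+1}X_{k+1,k}·id`. -/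
theorem cycle_commutation_rule {n : ℕ} [NeZero n] (k k1 m m1 p : Fin n)
    (hk1 : (k1 : ℕ) = (k : ℕ) + 1) (hm1 : (m1 : ℕ) + 1 = (m : ℕ))
    (hkm : k < m) (hmp : m < p) :
    gstar (cyc m k) * gstar (cyc p k) =
      ((MvPolynomial.X (k, k1) * MvPolynomial.X (k1, k) : R n) • (1 : A n)) *
        gstar (cyc p k1) * gstar (cyc m1 k) := by
  obtain ⟨N, rfl⟩ := Nat.exists_eq_succ_of_ne_zero (NeZero.ne n)
  have hkm' : (k:ℕ) < m := hkm
  have hmp' : (m:ℕ) < p := hmp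
  have hp : (p:ℕ) ≤ N := Nat.lt_succ_iff.mp p.isLt
  rw [gstar, gstar, gstar, gstar, single_mul_single, smul_one_eq, single_mul_single,
    single_mul_single, one_mul, permAct_one, cyc_mul_cyc k k1 m m1 p hk1 hm1 hkm' hmp']
  refine congrArg (Finsupp.single _) ?_
  -- now the polynomial identity
  rw [Xg_cyc m k (by omega), Xg_cyc p k (by omega), Xg_cyc p k1 (by omega),
    Xg_cyc m1 k (by omega), permAct_prod, permAct_prod]
  have hck : cyc m k k = k1 := by
    apply Fin.ext
    rw [cyc_val _ _ _ (by omega), if_neg (lt_irrefl _), if_pos hkm', hk1]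
  have hck2 : cyc p k1 k = k := by
    apply Fin.ext
    rw [cyc_val _ _ _ (by omega), if_pos (by omega)]
  rw [hck, hck2]
  have h1 : ∏ b ∈ Finset.Ioc k p, (X (k1, cyc m k b) : R (N+1))
      = ∏ y ∈ insert k (Finset.Ioc k1 p), (X (k1, y) : R (N+1)) := by
    refine prod_perm (cyc m k) ?_ ?_ (fun y => (X (k1, y) : R (N+1)))
    · intro b hb
      simp only [Finset.mem_Ioc, Fin.lt_def, Fin.le_def] at hb
      simp only [Finset.mem_insert, Finset.mem_Ioc, Fin.lt_def, Fin.le_def, Fin.ext_iff]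
      rw [cyc_val _ _ _ (by omega)]
      split_ifs <;> omega
    · intro y hy
      simp only [Finset.mem_insert, Finset.mem_Ioc, Fin.lt_def, Fin.le_def, Fin.ext_iff] at hy
      simp only [Finset.mem_Ioc, Fin.lt_def, Fin.le_def]
      rw [cyc_inv_val _ _ _ (by omega)]
      split_ifs <;> omega
  have h2 : ∏ b ∈ Finset.Ioc k m1, (X (k, cyc p k1 b) : R (N+1))
      = ∏ y ∈ Finset.Ioc k1 m, (X (k, y) : R (N+1)) := by
    refine prod_perm (cyc p k1) ?_ ?_ (fun y => (X (k, y) : R (N+1)))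
    · intro b hb
      simp only [Finset.mem_Ioc, Fin.lt_def, Fin.le_def] at hb
      simp only [Finset.mem_Ioc, Fin.lt_def, Fin.le_def]
      rw [cyc_val _ _ _ (by omega)]
      split_ifs <;> omega
    · intro y hy
      simp only [Finset.mem_Ioc, Fin.lt_def, Fin.le_def] at hy
      simp only [Finset.mem_Ioc, Fin.lt_def, Fin.le_def]
      rw [cyc_inv_val _ _ _ (by omega)]
      split_ifs <;> omega
  rw [h1, h2]
  rw [Finset.prod_insert (by
    rw [Finset.mem_Ioc, Fin.lt_def]; omega)]
  have h3 : Finset.Ioc k m = insert k1 (Finset.Ioc k1 m) := by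
    ext y
    simp only [Finset.mem_insert, Finset.mem_Ioc, Fin.lt_def, Fin.le_def, Fin.ext_iff]
    omega
  rw [h3, Finset.prod_insert (by rw [Finset.mem_Ioc, Fin.lt_def]; omega)]
  ring
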